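/- Let T be a compact normal operator on a nonzero complex Hilbert space. Then there exists an eigenvalue λ of T with |λ| = ‖T‖; in particular if T ≠ 0 then T has a nonzero eigenvalue. -/

import Mathlib

open ContinuousLinearMap in
theorem compact_normal_has_eigenvalue_of_max_modulus
    {H : Type*} [NormedAddCommGroup H] [InnerProductSpace ℂ H] [CompleteSpace H]
    [Nontrivial H] (T : H →L[ℂ] H) (hcpt : IsCompactOperator T)
    (hT : adjoint T ∘L T = T ∘L adjoint T) :
    ∃ lam : ℂ, (∃ x : H, x ≠ 0 ∧ T x = lam • x) ∧ ‖lam‖ = ‖T‖ ∧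
      (T ≠ 0 → lam ≠ 0) := by
  by_cases hT0 : T = 0
  · obtain ⟨x, hx⟩ := exists_ne (0 : H)
    exact ⟨0, ⟨x, hx, by simp [hT0]⟩, by simp [hT0], fun h => absurd hT0 h⟩
  set S : H →L[ℂ] H := adjoint T ∘L T with hSdef
  have hTpos : 0 < ‖T‖ := norm_pos_iff.mpr hT0
  set μ : ℝ := ‖T‖ ^ 2 with hμ
  have hμpos : 0 < μ := by positivity
  have hSnorm : ‖S‖ = μ := by rw [hμ, sq]; exact norm_adjoint_comp_self T
  have hScpt : IsCompactOperator S := by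
    have : IsCompactOperator (⇑(adjoint T) ∘ ⇑T) :=
      hcpt.continuous_comp (adjoint T).continuous
    exact this
  have hinner : ∀ x : H, (inner ℂ (S x) x : ℂ) = (‖T x‖ : ℂ) ^ 2 := by
    intro x
    rw [hSdef]
    simp only [ContinuousLinearMap.comp_apply, adjoint_inner_left]
    exact inner_self_eq_norm_sq_to_K (T x)
  -- a maximizing sequence
  have hseq : ∀ n : ℕ, ∃ x : H, ‖x‖ ≤ 1 ∧ ‖T‖ - 1 / (n + 1) < ‖T x‖ := by
    intro n
    have hr : ‖T‖ - 1 / (n + 1) < ‖T‖ := by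
      have : (0:ℝ) < 1 / (n + 1) := by positivity
      linarith
    obtain ⟨x, hx1, hx2⟩ := T.exists_lt_apply_of_lt_opNorm hr
    exact ⟨x, hx1.le, hx2⟩
  choose u hu1 hu2 using hseq
  have htendT : Filter.Tendsto (fun n => ‖T (u n)‖) Filter.atTop (nhds ‖T‖) := by
    have hlow : Filter.Tendsto (fun n : ℕ => ‖T‖ - 1 / (n + 1)) Filter.atTop (nhds ‖T‖) := by
      have : Filter.Tendsto (fun n : ℕ => 1 / ((n : ℝ) + 1)) Filter.atTop (nhds 0) :=
        tendsto_one_div_add_atTop_nhds_zero_nat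
      simpa using Filter.Tendsto.sub (tendsto_const_nhds (x := ‖T‖)) this
    refine tendsto_of_tendsto_of_tendsto_of_le_of_le hlow tendsto_const_nhds
      (fun n => (hu2 n).le) (fun n => ?_)
    calc ‖T (u n)‖ ≤ ‖T‖ * ‖u n‖ := T.le_opNorm (u n)
      _ ≤ ‖T‖ * 1 := by have := hu1 n; nlinarith
      _ = ‖T‖ := mul_one _
  -- the defect goes to zero
  have hre : ∀ n, Complex.re (inner ℂ (S (u n)) ((μ:ℂ) • u n) : ℂ) = μ * ‖T (u n)‖ ^ 2 := by
    intro n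
    rw [inner_smul_right, hinner, ← Complex.ofReal_pow, ← Complex.ofReal_mul,
      Complex.ofReal_re]
  have hgap : ∀ n, ‖S (u n) - μ • u n‖ ^ 2 ≤ 2 * μ ^ 2 - 2 * μ * ‖T (u n)‖ ^ 2 := by
    intro n
    have hsmul : (μ:ℝ) • u n = (μ:ℂ) • u n := RCLike.real_smul_eq_coe_smul (K := ℂ) μ (u n)
    rw [hsmul, norm_sub_sq (𝕜 := ℂ), RCLike.re_to_complex, hre]
    have h1 : ‖S (u n)‖ ≤ μ := by
      calc ‖S (u n)‖ ≤ ‖S‖ * ‖u n‖ := S.le_opNorm _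
        _ ≤ μ * 1 := by rw [hSnorm]; have := hu1 n; nlinarith
        _ = μ := mul_one _
    have h2 : ‖(μ:ℂ) • u n‖ ≤ μ := by
      rw [norm_smul]
      have : ‖(μ:ℂ)‖ = μ := by
        rw [Complex.norm_real, Real.norm_of_nonneg hμpos.le]
      rw [this]
      have := hu1 n; nlinarith
    have hS0 : 0 ≤ ‖S (u n)‖ := norm_nonneg _
    have h20 : 0 ≤ ‖(μ:ℂ) • u n‖ := norm_nonneg _
    nlinarith
  have hgap0 : Filter.Tendsto (fun n => S (u n) - μ • u n) Filter.atTop (nhds 0) := by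
    rw [tendsto_zero_iff_norm_tendsto_zero]
    have hsq : Filter.Tendsto (fun n => ‖S (u n) - μ • u n‖ ^ 2) Filter.atTop (nhds 0) := by
      have hrhs : Filter.Tendsto (fun n => 2 * μ ^ 2 - 2 * μ * ‖T (u n)‖ ^ 2)
          Filter.atTop (nhds 0) := by
        have h := ((htendT.pow 2).const_mul (2 * μ)).const_sub (2 * μ ^ 2)
        have : 2 * μ ^ 2 - 2 * μ * ‖T‖ ^ 2 = 0 := by rw [← hμ]; ring
        rwa [this] at h
      exact tendsto_of_tendsto_of_tendsto_of_le_of_le tendsto_const_nhds hrhs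
        (fun n => by positivity) hgap
    have := hsq.sqrt
    simp only [Real.sqrt_sq (norm_nonneg _), Real.sqrt_zero] at this
    exact this
  -- compactness: extract convergent subsequence of S (u n)
  obtain ⟨K, hKcpt, hKsub⟩ := hScpt.image_subset_compact_of_bounded
    (f := (S : H →ₗ[ℂ] H)) (Metric.isBounded_closedBall (x := (0:H)) (r := 1))
  have hmem : ∀ n, S (u n) ∈ K := fun n =>
    hKsub ⟨u n, by simpa [Metric.mem_closedBall, dist_zero_right] using hu1 n, rfl⟩
  obtain ⟨z, hzK, φ, hφ, hφtend⟩ := hKcpt.tendsto_subseq hmem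
  -- limit point x
  have hμtend : Filter.Tendsto (fun n => μ • u (φ n)) Filter.atTop (nhds z) := by
    have : (fun n => μ • u (φ n)) =
        fun n => S (u (φ n)) - (S (u (φ n)) - μ • u (φ n)) := by funext n; abel
    rw [this]
    simpa using hφtend.sub ((hgap0.comp hφ.tendsto_atTop))
  set x : H := μ⁻¹ • z with hxdef
  have hutend : Filter.Tendsto (fun n => u (φ n)) Filter.atTop (nhds x) := by
    have := hμtend.const_smul μ⁻¹
    simpa [hxdef, smul_smul, inv_mul_cancel₀ hμpos.ne'] using this
  have hSx : S x = (μ:ℂ) • x := by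
    have h1 : Filter.Tendsto (fun n => S (u (φ n))) Filter.atTop (nhds (S x)) :=
      (S.continuous.tendsto x).comp hutend
    have h2 : Filter.Tendsto (fun n => μ • u (φ n)) Filter.atTop (nhds (μ • x)) :=
      hutend.const_smul μ
    have hz1 : S x = z := tendsto_nhds_unique h1 hφtend
    have hz2 : μ • x = z := tendsto_nhds_unique h2 hμtend
    rw [hz1, ← hz2, RCLike.real_smul_eq_coe_smul (K := ℂ)]
    rfl
  have hTx : ‖T x‖ = ‖T‖ := by
    have h1 : Filter.Tendsto (fun n => ‖T (u (φ n))‖) Filter.atTop (nhds ‖T x‖) :=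
      (continuous_norm.tendsto _).comp ((T.continuous.tendsto x).comp hutend)
    have h2 : Filter.Tendsto (fun n => ‖T (u (φ n))‖) Filter.atTop (nhds ‖T‖) :=
      htendT.comp hφ.tendsto_atTop
    exact tendsto_nhds_unique h1 h2
  have hx0 : x ≠ 0 := by
    intro h
    rw [h] at hTx
    simp at hTx
    exact hTpos.ne' hTx.symm
  -- the eigenspace of S for μ
  set E : Submodule ℂ H := LinearMap.ker ((S - (μ:ℂ) • ContinuousLinearMap.id ℂ H : H →L[ℂ] H) : H →ₗ[ℂ] H) with hEdef
  have hmemE : ∀ v : H, v ∈ E ↔ S v = (μ:ℂ) • v := by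
    intro v
    simp [hEdef, LinearMap.mem_ker, sub_eq_zero]
  have hxE : x ∈ E := (hmemE x).mpr hSx
  have hEclosed : IsClosed (E : Set H) :=
    ContinuousLinearMap.isClosed_ker (S - (μ:ℂ) • ContinuousLinearMap.id ℂ H)
  -- E is finite dimensional (Riesz)
  have hBsub : ((E : Set H) ∩ Metric.closedBall 0 1) ⊆ (fun y : H => μ⁻¹ • y) '' K := by
    rintro v ⟨hvE, hvball⟩
    refine ⟨S v, hKsub ⟨v, hvball, rfl⟩, ?_⟩
    have hv : S v = (μ:ℂ) • v := (hmemE v).mp hvE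
    have hsm : (μ:ℝ) • v = (μ:ℂ) • v := RCLike.real_smul_eq_coe_smul (K := ℂ) μ v
    show μ⁻¹ • S v = v
    rw [hv, ← hsm, smul_smul, inv_mul_cancel₀ hμpos.ne', one_smul]
  have hBcpt : IsCompact ((E : Set H) ∩ Metric.closedBall 0 1) := by
    refine IsCompact.of_isClosed_subset (hKcpt.image ?_) ?_ hBsub
    · exact continuous_const_smul μ⁻¹
    · exact hEclosed.inter Metric.isClosed_closedBall
  haveI hEfd : FiniteDimensional ℂ E := by
    apply FiniteDimensional.of_isCompact_closedBall₀ ℂ (one_pos (α := ℝ))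
    have himg : Subtype.val '' (Metric.closedBall (0 : E) 1) =
        (E : Set H) ∩ Metric.closedBall 0 1 := by
      ext y
      constructor
      · rintro ⟨v, hv, rfl⟩
        refine ⟨v.2, ?_⟩
        simpa [Metric.mem_closedBall, dist_zero_right] using hv
      · rintro ⟨hyE, hy⟩
        refine ⟨⟨y, hyE⟩, ?_, rfl⟩
        simpa [Metric.mem_closedBall, dist_zero_right] using hy
    rw [Topology.IsEmbedding.subtypeVal.isCompact_iff, himg]
    exact hBcpt
  haveI hEnt : Nontrivial E := ⟨⟨⟨x, hxE⟩, 0, fun h => hx0 (by simpa using congrArg Subtype.val h)⟩⟩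
  -- T restricts to E
  have hpt : ∀ w : H, adjoint T (T w) = T (adjoint T w) := fun w => by
    have := DFunLike.congr_fun hT w
    exact this
  have hTE : ∀ v ∈ E, T v ∈ E := by
    intro v hv
    rw [hmemE]
    have hcomm : S (T v) = T (S v) := by
      show adjoint T (T (T v)) = T (S v)
      rw [hpt (T v)]
      rfl
    rw [hcomm, (hmemE v).mp hv, map_smul]
  clear_value E
  set f : E →ₗ[ℂ] E := LinearMap.restrict (T : H →ₗ[ℂ] H) hTE with hfdef
  obtain ⟨lam, hlam⟩ := Module.End.exists_eigenvalue f
  obtain ⟨v, hv⟩ := hlam.exists_hasEigenvector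
  have hvne : (v : H) ≠ 0 := fun h => hv.right (by simpa using Subtype.ext h)
  have hTv : T (v : H) = lam • (v : H) := by
    have := hv.apply_eq_smul
    have h2 := congrArg Subtype.val this
    simpa [hfdef, LinearMap.restrict_apply] using h2
  -- compute the norm of lam
  have hnormTv : ‖T (v : H)‖ ^ 2 = μ * ‖(v : H)‖ ^ 2 := by
    have h1 : (inner ℂ (S (v : H)) (v : H) : ℂ) = (‖T (v : H)‖ : ℂ) ^ 2 := hinner v
    have h2 : S (v : H) = (μ:ℂ) • (v : H) := (hmemE _).mp v.2
    rw [h2, inner_smul_left, inner_self_eq_norm_sq_to_K, Complex.conj_ofReal] at h1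
    simpa [← Complex.ofReal_pow] using congrArg Complex.re h1.symm
  have hlamnorm : ‖lam‖ = ‖T‖ := by
    have h1 : ‖T (v : H)‖ = ‖lam‖ * ‖(v : H)‖ := by rw [hTv, norm_smul]
    have hv0 : 0 < ‖(v : H)‖ := norm_pos_iff.mpr hvne
    have h2 : ‖lam‖ ^ 2 = ‖T‖ ^ 2 := by
      have h4 : (‖lam‖ * ‖(v : H)‖) ^ 2 = μ * ‖(v : H)‖ ^ 2 := by
        rw [← h1]; exact hnormTv
      have h5 : μ = ‖T‖ ^ 2 := hμ
      have h6 : ‖lam‖ ^ 2 * ‖(v : H)‖ ^ 2 = ‖T‖ ^ 2 * ‖(v : H)‖ ^ 2 := by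
        rw [← h5]; linear_combination h4
      exact mul_right_cancel₀ (by positivity) h6
    calc ‖lam‖ = Real.sqrt (‖lam‖ ^ 2) := (Real.sqrt_sq (norm_nonneg _)).symm
      _ = Real.sqrt (‖T‖ ^ 2) := by rw [h2]
      _ = ‖T‖ := Real.sqrt_sq (norm_nonneg _)
  refine ⟨lam, ⟨(v : H), hvne, hTv⟩, hlamnorm, fun _ => ?_⟩
  intro h
  rw [h] at hlamnorm
  simp at hlamnorm
  exact hTpos.ne' hlamnorm.symm
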